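/- Let d ≥ 1 and β ∈ ℝ. Then the following are equivalent: (i) for every ψ : Fin d × Fin d → ℂ, 0 ≤ Σ_{i,j} |ψ (i,j)|² + β · ‖Σ_i ψ (i,i)‖²; (ii) β ≥ -1/d. (In the paper's terms: the partial transpose of the Werner state ρ_w is positive semidefinite iff β ≥ -1/d; i.e., ρ_w is NPT iff β < -1/d.) -/

import Mathlib

/-- For `d ≥ 1` and `β : ℝ`, the partial transpose of the Werner state
with parameter `β` is positive semidefinite iff `β ≥ -1/d`: nonnegativity of
`∑ |ψ(i,j)|² + β‖∑ i, ψ(i,i)‖²` for all `ψ` is equivalent to `β ≥ -1/d`. -/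
theorem werner_ppt_iff
    (d : ℕ) (hd : 1 ≤ d) (β : ℝ) :
    (∀ ψ : Fin d × Fin d → ℂ,
        0 ≤ (∑ p : Fin d × Fin d, ‖ψ p‖ ^ 2) + β * ‖∑ i : Fin d, ψ (i, i)‖ ^ 2) ↔
      β ≥ -1 / (d : ℝ) := by
  have hd0 : (0 : ℝ) < d := by exact_mod_cast hd
  constructor
  · intro h
    have key := h (fun p => if p.1 = p.2 then 1 else 0)
    have e1 : (∑ p : Fin d × Fin d,
        ‖(fun p : Fin d × Fin d => if p.1 = p.2 then (1:ℂ) else 0) p‖ ^ 2) = d := by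
      rw [Fintype.sum_prod_type]
      have h' : ∀ i : Fin d, (∑ j : Fin d, ‖(if i = j then (1:ℂ) else 0)‖ ^ 2) = 1 := by
        intro i
        simp [apply_ite (fun z : ℂ => ‖z‖ ^ 2)]
      simp only [h']
      simp
    have e2 : ‖∑ i : Fin d,
        (fun p : Fin d × Fin d => if p.1 = p.2 then (1:ℂ) else 0) (i, i)‖ ^ 2 = (d:ℝ) ^ 2 := by
      simp
    rw [e1, e2] at key
    rw [ge_iff_le, div_le_iff₀ hd0]
    nlinarith
  · intro hβ ψ
    have hT0 : (0:ℝ) ≤ ‖∑ i : Fin d, ψ (i, i)‖ ^ 2 := sq_nonneg _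
    have hS0 : (0:ℝ) ≤ ∑ p : Fin d × Fin d, ‖ψ p‖ ^ 2 :=
      Finset.sum_nonneg fun _ _ => sq_nonneg _
    rcases le_or_gt 0 β with hb | hb
    · have := mul_nonneg hb hT0
      linarith
    · have hCS1 : ‖∑ i : Fin d, ψ (i, i)‖ ^ 2 ≤ (∑ i : Fin d, ‖ψ (i, i)‖) ^ 2 :=
        pow_le_pow_left₀ (norm_nonneg _) (norm_sum_le _ _) 2
      have hCS2 : (∑ i : Fin d, ‖ψ (i, i)‖) ^ 2 ≤ (d:ℝ) * ∑ i : Fin d, ‖ψ (i, i)‖ ^ 2 := by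
        simpa using sq_sum_le_card_mul_sum_sq
          (s := (Finset.univ : Finset (Fin d))) (f := fun i : Fin d => ‖ψ (i, i)‖)
      have hdiag : (∑ i : Fin d, ‖ψ (i, i)‖ ^ 2) ≤ ∑ p : Fin d × Fin d, ‖ψ p‖ ^ 2 := by
        rw [Fintype.sum_prod_type]
        apply Finset.sum_le_sum
        intro i _
        exact Finset.single_le_sum (fun j _ => sq_nonneg ‖ψ (i, j)‖) (Finset.mem_univ i)
      have hTS : ‖∑ i : Fin d, ψ (i, i)‖ ^ 2 ≤ (d:ℝ) * ∑ p : Fin d × Fin d, ‖ψ p‖ ^ 2 := by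
        nlinarith
      have h1 : -1 / (d:ℝ) * ‖∑ i : Fin d, ψ (i, i)‖ ^ 2
          ≤ β * ‖∑ i : Fin d, ψ (i, i)‖ ^ 2 :=
        mul_le_mul_of_nonneg_right hβ hT0
      have h2 : 0 ≤ (∑ p : Fin d × Fin d, ‖ψ p‖ ^ 2)
          + (-1 / (d:ℝ)) * ‖∑ i : Fin d, ψ (i, i)‖ ^ 2 := by
        rw [neg_div, neg_mul, ← sub_eq_add_neg, sub_nonneg, div_mul_eq_mul_div,
          one_mul, div_le_iff₀ hd0]
        nlinarith
      linarith
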